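/- Let λ₁,…,λ_k be real numbers with |λ_i| < 1 and s₁,…,s_k integers with S = s₁+⋯+s_k ≥ 0. Then for every n, (1/n)∑_{i₁,…,i_k=1}^n ∏_{p=1}^k λ_p^{|i_p - i_{p+1} - s_p|} ≤ ∑_{m₁+⋯+m_k=S} ∏_{p=1}^k |λ_p|^{|m_p|} (indices cyclic, i_{k+1}=i₁); that is, the finite average is bounded above by the infinite sum B_S with |λ|'s. -/

import Mathlib

open Finset

private lemma summable_abs_pow_natAbs {r : ℝ} (h0 : 0 ≤ r) (h1 : r < 1) :
    Summable (fun m : ℤ => r ^ m.natAbs) := by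
  apply Summable.of_nat_of_neg
  · simpa using summable_geometric_of_lt_one h0 h1
  · simpa using summable_geometric_of_lt_one h0 h1

private lemma summable_pi_pow (n : ℕ) (g : Fin n → ℤ → ℝ) (h0 : ∀ p m, 0 ≤ g p m)
    (hs : ∀ p, Summable (g p)) :
    Summable (fun f : Fin n → ℤ => ∏ p, g p (f p)) := by
  induction n with
  | zero =>
      have : (fun f : Fin 0 → ℤ => ∏ p, g p (f p)) = fun _ => 1 := by
        funext f; simp
      rw [this]
      exact .of_finite
  | succ n ih =>
      have ih0 : Summable (fun f : Fin n → ℤ => ∏ p, g p.succ (f p)) :=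
        ih (fun p => g p.succ) (fun p m => h0 _ _) (fun p => hs _)
      have hfn : ∀ m, 0 ≤ g 0 m := fun m => h0 0 m
      have hgn : ∀ f : Fin n → ℤ, 0 ≤ ∏ p, g p.succ (f p) :=
        fun f => Finset.prod_nonneg fun p _ => h0 _ _
      have hmul := Summable.mul_of_nonneg (hs 0) ih0 hfn hgn
      have hinj : Function.Injective
          (fun f : Fin (n+1) → ℤ => ((f 0, f ∘ Fin.succ) : ℤ × (Fin n → ℤ))) := by
        intro a b h
        rw [Prod.mk.injEq] at h
        funext p
        refine Fin.cases ?_ ?_ p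
        · exact h.1
        · intro q; exact congrFun h.2 q
      have hcomp := hmul.comp_injective hinj
      have heq : (fun f : Fin (n+1) → ℤ => ∏ p, g p (f p))
          = (fun x : ℤ × (Fin n → ℤ) => g 0 x.1 * ∏ p, g p.succ (x.2 p))
            ∘ (fun f : Fin (n+1) → ℤ => ((f 0, f ∘ Fin.succ) : ℤ × (Fin n → ℤ))) := by
        funext f
        simp [Function.comp, Fin.prod_univ_succ]
      rw [heq]
      exact hcomp

private lemma rot_const (k : ℕ) (hk : 0 < k) (d : Fin k → ℤ)
    (h : ∀ p, d (finRotate k p) = d p) : ∀ p, d p = d ⟨0, hk⟩ := by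
  obtain ⟨k', rfl⟩ : ∃ k', k = k' + 1 := ⟨k - 1, by omega⟩
  rintro ⟨t, ht⟩
  induction t with
  | zero => rfl
  | succ t iht =>
      have ht' : t < k' + 1 := by omega
      have hrot : finRotate (k' + 1) ⟨t, ht'⟩ = ⟨t + 1, ht⟩ := by
        rw [finRotate_succ_apply]
        apply Fin.ext
        have h1 : (1 : Fin (k' + 1)).val = 1 := by
          simp [Fin.val_one, Nat.mod_eq_of_lt (show 1 < k' + 1 by omega)]
        simp [Fin.val_add, h1, Nat.mod_eq_of_lt ht]
      calc d ⟨t + 1, ht⟩ = d (finRotate (k' + 1) ⟨t, ht'⟩) := by rw [hrot]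
        _ = d ⟨t, ht'⟩ := h _
        _ = d ⟨0, hk⟩ := iht ht'

/-- The finite cyclic average is bounded by the infinite sum with |λ|'s:
(1/n)∑_{i₁,…,i_k=1}^n ∏_p λ_p^{|i_p-i_{p+1}-s_p|} ≤ ∑_{m₁+⋯+m_k=S} ∏_p |λ_p|^{|m_p|}. -/
theorem stmt9 (k : ℕ) (hk : 2 ≤ k) (lam : Fin k → ℝ)
    (hlam : ∀ i, |lam i| < 1) (s : Fin k → ℤ) (hS : 0 ≤ ∑ i, s i) :
    ∀ n : ℕ,
      (1 / (n : ℝ)) *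
          ∑ i ∈ Fintype.piFinset (fun _ : Fin k => Finset.Icc (1 : ℤ) n),
            ∏ p, lam p ^ (i p - i (finRotate k p) - s p).natAbs
        ≤ ∑' m : {f : Fin k → ℤ // ∑ i, f i = ∑ i, s i},
            ∏ p, |lam p| ^ ((m : Fin k → ℤ) p).natAbs := by
  intro n
  classical
  have hk0 : 0 < k := by omega
  set S := ∑ i, s i with hSdef
  set F : (Fin k → ℤ) → ℝ := fun f => ∏ p, |lam p| ^ (f p).natAbs with hF
  have hFnonneg : ∀ f, 0 ≤ F f := fun f =>
    Finset.prod_nonneg fun p _ => pow_nonneg (abs_nonneg _) _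
  have hsumfull : Summable F :=
    summable_pi_pow k (fun p m => |lam p| ^ m.natAbs)
      (fun p m => pow_nonneg (abs_nonneg _) _)
      (fun p => summable_abs_pow_natAbs (abs_nonneg _) (hlam p))
  have hsub : Summable (fun m : {f : Fin k → ℤ // ∑ i, f i = S} => F (m : Fin k → ℤ)) :=
    hsumfull.subtype {f | ∑ i, f i = S}
  have htsum_nonneg : (0:ℝ) ≤ ∑' m : {f : Fin k → ℤ // ∑ i, f i = S}, F (m : Fin k → ℤ) :=
    tsum_nonneg fun m => hFnonneg _
  set A := Fintype.piFinset (fun _ : Fin k => Finset.Icc (1 : ℤ) n) with hA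
  set φ : (Fin k → ℤ) → (Fin k → ℤ) := fun i p => s p + i (finRotate k p) - i p with hφ
  have hφS : ∀ i, ∑ p, φ i p = S := by
    intro i
    have h1 : ∑ p, i (finRotate k p) = ∑ p, i p := Equiv.sum_comp (finRotate k) i
    simp only [hφ]
    rw [Finset.sum_sub_distrib, Finset.sum_add_distrib, h1, hSdef]
    ring
  have step1 : ∑ i ∈ A, ∏ p, lam p ^ (i p - i (finRotate k p) - s p).natAbs
      ≤ ∑ i ∈ A, F (φ i) := by
    apply Finset.sum_le_sum
    intro i _
    have h1 : ∏ p, lam p ^ (i p - i (finRotate k p) - s p).natAbs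
        ≤ ∏ p, |lam p| ^ (i p - i (finRotate k p) - s p).natAbs := by
      calc ∏ p, lam p ^ (i p - i (finRotate k p) - s p).natAbs
          ≤ |∏ p, lam p ^ (i p - i (finRotate k p) - s p).natAbs| := le_abs_self _
        _ = ∏ p, |lam p| ^ (i p - i (finRotate k p) - s p).natAbs := by
            rw [Finset.abs_prod]; exact Finset.prod_congr rfl fun p _ => by rw [abs_pow]
    refine h1.trans_eq ?_
    refine Finset.prod_congr rfl fun p _ => ?_
    congr 1
    have h2 : φ i p = -(i p - i (finRotate k p) - s p) := by simp only [hφ]; ring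
    rw [h2, Int.natAbs_neg]
  have step2 : ∑ i ∈ A, F (φ i)
      = ∑ b ∈ A.image φ, (A.filter fun a => φ a = b).card • F b :=
    Finset.sum_comp F φ
  have hcard : ∀ b, (A.filter fun a => φ a = b).card ≤ n := by
    intro b
    have hinj : Set.InjOn (fun i : Fin k → ℤ => i ⟨0, hk0⟩)
        ↑(A.filter fun a => φ a = b) := by
      intro i hi j hj hij
      rw [Finset.mem_coe, Finset.mem_filter] at hi hj
      have hd : ∀ p, i (finRotate k p) - j (finRotate k p) = i p - j p := by
        intro p
        have h1 : φ i p = φ j p := congrFun (hi.2.trans hj.2.symm) p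
        simp only [hφ] at h1
        linarith
      have hall := rot_const k hk0 (fun p => i p - j p) hd
      funext p
      have h3 : i p - j p = i ⟨0, hk0⟩ - j ⟨0, hk0⟩ := hall p
      have h4 : i ⟨0, hk0⟩ = j ⟨0, hk0⟩ := hij
      linarith
    have hmaps : ∀ i ∈ (A.filter fun a => φ a = b), i ⟨0, hk0⟩ ∈ Finset.Icc (1:ℤ) n := by
      intro i hi
      have h1 := (Finset.mem_filter.mp hi).1
      rw [hA, Fintype.mem_piFinset] at h1
      exact h1 _
    have h2 := Finset.card_le_card_of_injOn (fun i : Fin k → ℤ => i ⟨0, hk0⟩) hmaps hinj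
    simpa [Int.card_Icc] using h2
  have step3 : ∑ b ∈ A.image φ, (A.filter fun a => φ a = b).card • F b
      ≤ (n : ℝ) * ∑ b ∈ A.image φ, F b := by
    rw [Finset.mul_sum]
    apply Finset.sum_le_sum
    intro b _
    rw [nsmul_eq_mul]
    exact mul_le_mul_of_nonneg_right (by exact_mod_cast hcard b) (hFnonneg b)
  have step4 : ∑ b ∈ A.image φ, F b
      ≤ ∑' m : {f : Fin k → ℤ // ∑ i, f i = S}, F (m : Fin k → ℤ) := by
    have heq : ∑ b ∈ A.image φ, F b
        = ∑ m ∈ (A.image φ).subtype (fun f => ∑ i, f i = S), F (m : Fin k → ℤ) := by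
      rw [Finset.sum_subtype_eq_sum_filter]
      congr 1
      apply (Finset.filter_true_of_mem ?_).symm
      intro b hb
      obtain ⟨i, _, rfl⟩ := Finset.mem_image.mp hb
      exact hφS i
    rw [heq]
    exact Summable.sum_le_tsum _ (fun m _ => hFnonneg _) hsub
  rcases Nat.eq_zero_or_pos n with hn | hn
  · subst hn
    simp only [Nat.cast_zero, div_zero, zero_mul]
    exact htsum_nonneg
  · have hchain : ∑ i ∈ A, ∏ p, lam p ^ (i p - i (finRotate k p) - s p).natAbs
        ≤ (n : ℝ) * ∑' m : {f : Fin k → ℤ // ∑ i, f i = S}, F (m : Fin k → ℤ) := by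
      refine step1.trans (step2.trans_le (step3.trans ?_))
      exact mul_le_mul_of_nonneg_left step4 (by positivity)
    have hnpos : (0:ℝ) < n := by exact_mod_cast hn
    calc (1 / (n : ℝ)) * ∑ i ∈ A, ∏ p, lam p ^ (i p - i (finRotate k p) - s p).natAbs
        ≤ (1 / (n : ℝ)) * ((n : ℝ) * ∑' m : {f : Fin k → ℤ // ∑ i, f i = S}, F (m : Fin k → ℤ)) :=
          mul_le_mul_of_nonneg_left hchain (by positivity)
      _ = ∑' m : {f : Fin k → ℤ // ∑ i, f i = S}, F (m : Fin k → ℤ) := by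
          field_simp
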